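/- arXiv:1202.0168 — 2 statements merged into one kernel-verified Lean document; each statement's English description precedes it below -/
import Mathlib

section
/- Let M be a fixed positive integer. Then as N → ∞ through integers N > M, log(Γ_M(N)) = N·∑_{i=1}^{M} log(N - i) + (M²/2)·log(πe/N) + (M/2)·log(2e) - MN + o(1), where Γ_M(N) = π^{M(M-1)/2} ∏_{i=1}^{M}(N-i)!. -/
open Filter Real Finset

lemma stirling_log_tendsto :
    Tendsto (fun n : ℕ => Real.log (Nat.factorial n) -
      ((n : ℝ) * Real.log n - n + (1/2) * Real.log (2 * Real.pi * n))) atTop (nhds 0) := by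
  have h1 := Stirling.tendsto_stirlingSeq_sqrt_pi
  have hs : (0:ℝ) < Real.sqrt Real.pi := Real.sqrt_pos.mpr Real.pi_pos
  have h2 : Tendsto (fun n => Real.log (Stirling.stirlingSeq n)) atTop
      (nhds (Real.log (Real.sqrt Real.pi))) :=
    (Real.continuousAt_log hs.ne').tendsto.comp h1
  have h3 : Tendsto (fun n => Real.log (Stirling.stirlingSeq n) - Real.log (Real.sqrt Real.pi))
      atTop (nhds 0) := by
    simpa using h2.sub (tendsto_const_nhds (x := Real.log (Real.sqrt Real.pi)))
  apply h3.congr'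
  filter_upwards [eventually_ge_atTop 1] with n hn
  have hn0 : (0:ℝ) < (n:ℝ) := by exact_mod_cast hn
  have hfac : (0:ℝ) < (Nat.factorial n : ℝ) := by exact_mod_cast n.factorial_pos
  rw [Stirling.stirlingSeq, Real.log_div hfac.ne' (by positivity),
    Real.log_mul (by positivity) (by positivity), Real.log_sqrt (by positivity),
    Real.log_pow, Real.log_div hn0.ne' (Real.exp_pos 1).ne', Real.log_exp,
    Real.log_mul two_ne_zero hn0.ne', Real.log_sqrt Real.pi_pos.le,
    Real.log_mul (by positivity) hn0.ne', Real.log_mul two_ne_zero Real.pi_ne_zero]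
  ring

lemma gauss_Icc (M : ℕ) : (∑ i ∈ Finset.Icc 1 M, (i:ℝ)) * 2 = M * (M + 1) := by
  induction M with
  | zero => simp
  | succ n ih =>
    rw [Finset.sum_Icc_succ_top (by omega)]
    push_cast
    push_cast at ih
    ring_nf
    ring_nf at ih
    linarith

theorem log_multivariate_gamma_asymptotic (M : ℕ) (hM : 0 < M) :
    Filter.Tendsto
      (fun N : ℕ =>
        Real.log (Real.pi ^ (M * (M - 1) / 2) *
            ∏ i ∈ Finset.Icc 1 M, (Nat.factorial (N - i) : ℝ))
          - ((N : ℝ) * ∑ i ∈ Finset.Icc 1 M, Real.log ((N : ℝ) - i)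
              + ((M : ℝ) ^ 2 / 2) * Real.log (Real.pi * Real.exp 1 / N)
              + ((M : ℝ) / 2) * Real.log (2 * Real.exp 1)
              - (M : ℝ) * N))
      Filter.atTop (nhds 0) := by
  set f : ℕ → ℝ := fun n => Real.log (Nat.factorial n) -
      ((n : ℝ) * Real.log n - n + (1/2) * Real.log (2 * Real.pi * n)) with hf
  have hterm : ∀ i ∈ Finset.Icc 1 M, Tendsto
      (fun N : ℕ => f (N - i) + ((1:ℝ)/2 - i) * Real.log (((N:ℝ) - i)/N))
      atTop (nhds 0) := by
    intro i _
    have hA : Tendsto (fun N : ℕ => f (N - i)) atTop (nhds 0) :=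
      stirling_log_tendsto.comp (tendsto_sub_atTop_nat i)
    have hq : Tendsto (fun N : ℕ => ((N:ℝ) - i)/N) atTop (nhds 1) := by
      have h1 : Tendsto (fun N : ℕ => 1 - (i:ℝ)/N) atTop (nhds 1) := by
        simpa using (tendsto_const_nhds (x := (1:ℝ))).sub
          (tendsto_const_div_atTop_nhds_zero_nat (i:ℝ))
      apply h1.congr'
      filter_upwards [eventually_ge_atTop 1] with N hN
      have : (N:ℝ) ≠ 0 := by positivity
      field_simp
    have hB : Tendsto (fun N : ℕ => Real.log (((N:ℝ) - i)/N)) atTop (nhds 0) := by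
      have := (Real.continuousAt_log one_ne_zero).tendsto.comp hq
      simpa [Function.comp_def] using this
    have := hA.add (hB.const_mul ((1:ℝ)/2 - i))
    simpa [mul_comm] using this
  have hsum := tendsto_finset_sum (Finset.Icc 1 M) hterm
  rw [Finset.sum_const_zero] at hsum
  apply hsum.congr'
  filter_upwards [eventually_ge_atTop (M+1)] with N hN
  have hNpos : (0:ℝ) < (N:ℝ) := by
    have : 0 < N := by omega
    exact_mod_cast this
  -- casts and positivity for each i
  have hcast : ∀ i ∈ Finset.Icc 1 M, ((N - i : ℕ) : ℝ) = (N:ℝ) - i := by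
    intro i hi
    rw [Finset.mem_Icc] at hi
    exact_mod_cast Nat.cast_sub (by omega)
  have hpos : ∀ i ∈ Finset.Icc 1 M, (0:ℝ) < (N:ℝ) - i := by
    intro i hi
    rw [Finset.mem_Icc] at hi
    have : (i:ℝ) < N := by exact_mod_cast (by omega : i < N)
    linarith
  have hprod_ne : (∏ i ∈ Finset.Icc 1 M, (Nat.factorial (N - i) : ℝ)) ≠ 0 := by
    apply Finset.prod_ne_zero_iff.mpr
    intro i _
    exact_mod_cast (Nat.factorial_pos _).ne'
  have hc2 : ((M * (M - 1) / 2 : ℕ) : ℝ) * 2 = (M:ℝ) * ((M:ℝ) - 1) := by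
    have hdvd : 2 ∣ M * (M - 1) := by
      rcases Nat.even_or_odd M with h | h
      · exact (h.mul_right _).two_dvd
      · exact ((Nat.Odd.sub_odd h odd_one).mul_left _).two_dvd
    have h2' : M * (M - 1) / 2 * 2 = M * (M - 1) := Nat.div_mul_cancel hdvd
    calc ((M * (M - 1) / 2 : ℕ) : ℝ) * 2 = ((M * (M - 1) : ℕ) : ℝ) := by exact_mod_cast h2'
      _ = (M:ℝ) * ((M:ℝ) - 1) := by push_cast [Nat.cast_sub hM]; ring
  have hS := gauss_Icc M
  -- rewrite each summand of the RHS sum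
  have hsummand : ∀ i ∈ Finset.Icc 1 M,
      f (N - i) + ((1:ℝ)/2 - i) * Real.log (((N:ℝ) - i)/N)
      = Real.log ((Nat.factorial (N - i) : ℝ))
        + (-(N:ℝ)) * Real.log ((N:ℝ) - i) + ((N:ℝ) - i)
        + (-(1/2)) * (Real.log 2 + Real.log Real.pi)
        + ((i:ℝ) - 1/2) * Real.log (N:ℝ) := by
    intro i hi
    have hpi := hpos i hi
    rw [hf]
    simp only [hcast i hi]
    rw [Real.log_div hpi.ne' hNpos.ne',
      Real.log_mul (by positivity) hpi.ne', Real.log_mul two_ne_zero Real.pi_ne_zero]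
    ring
  rw [Finset.sum_congr rfl hsummand]
  rw [Real.log_mul (pow_ne_zero _ Real.pi_ne_zero) hprod_ne, Real.log_pow,
    Real.log_prod (fun i hi => by exact_mod_cast (Nat.factorial_pos _).ne'),
    Real.log_div (by positivity) hNpos.ne', Real.log_mul Real.pi_ne_zero (Real.exp_ne_zero 1),
    Real.log_mul two_ne_zero (Real.exp_ne_zero 1), Real.log_exp]
  simp only [Finset.sum_add_distrib, Finset.sum_sub_distrib, ← Finset.mul_sum,
    ← Finset.sum_mul, Finset.sum_const, Nat.card_Icc, nsmul_eq_mul, Finset.sum_sub_distrib]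
  have hcard : ((M + 1 - 1 : ℕ) : ℝ) = (M:ℝ) := by push_cast; ring
  rw [hcard]
  linear_combination (-Real.log Real.pi / 2) * hc2 + ((Real.log (N:ℝ) - 1)/2) * hS
end

section
/- Weyl's inequality for eigenvalue sums: if A and B are n × n Hermitian matrices, then for every index i, λ_i(A + B) ≤ λ_i(A) + λ_1(B), where λ_1 ≥ λ_2 ≥ … ≥ λ_n denote eigenvalues in decreasing order. -/
open Matrix Finset Module

noncomputable section WeylAux

variable {n : ℕ}

local notation "E" => EuclideanSpace ℂ (Fin n)

/-- Quadratic form in terms of eigen-coordinates. -/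
lemma quad_repr (b : OrthonormalBasis (Fin n) ℂ (EuclideanSpace ℂ (Fin n)))
    (T : EuclideanSpace ℂ (Fin n) →ₗ[ℂ] EuclideanSpace ℂ (Fin n))
    (μ : Fin n → ℝ) (hT : ∀ j, T (b j) = (μ j : ℂ) • b j) (x : E) :
    RCLike.re (inner ℂ x (T x) : ℂ) = ∑ j, μ j * ‖b.repr x j‖ ^ 2 := by
  have hx : T x = ∑ j, (b.repr x j * (μ j : ℂ)) • b j := by
    conv_lhs => rw [← b.sum_repr x]
    rw [map_sum]
    refine Finset.sum_congr rfl fun j _ => ?_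
    rw [LinearMap.map_smul, hT j, smul_smul]
  have h1 : (inner ℂ x (T x) : ℂ) = ((∑ j, μ j * ‖b.repr x j‖ ^ 2 : ℝ) : ℂ) := by
    rw [hx, inner_sum]
    push_cast
    refine Finset.sum_congr rfl fun j _ => ?_
    rw [inner_smul_right]
    have hc : (inner ℂ x (b j) : ℂ) = starRingEnd ℂ (b.repr x j) := by
      rw [b.repr_apply_apply, inner_conj_symm]
    rw [hc, mul_comm (b.repr x j), mul_assoc, Complex.mul_conj, ← Complex.ofReal_mul]
    norm_cast
    simp [Complex.normSq_eq_norm_sq]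
  rw [h1]
  exact Complex.ofReal_re _

lemma repr_eq_zero_of_mem_span (b : OrthonormalBasis (Fin n) ℂ (EuclideanSpace ℂ (Fin n)))
    (s : Finset (Fin n)) {x : E} (hx : x ∈ Submodule.span ℂ (b '' ↑s))
    {j : Fin n} (hj : j ∉ s) : b.repr x j = 0 := by
  rw [b.repr_apply_apply]
  induction hx using Submodule.span_induction with
  | mem y hy =>
    obtain ⟨k, hk, rfl⟩ := hy
    exact b.orthonormal.2 (fun h => hj (h ▸ hk))
  | zero => simp
  | add y z _ _ hy hz => rw [inner_add_right, hy, hz, add_zero]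
  | smul c y _ hy => rw [inner_smul_right, hy, mul_zero]

lemma norm_sq_repr (b : OrthonormalBasis (Fin n) ℂ (EuclideanSpace ℂ (Fin n))) (x : E) :
    ‖x‖ ^ 2 = ∑ j, ‖b.repr x j‖ ^ 2 := by
  have h := quad_repr b LinearMap.id (fun _ => 1) (fun j => by simp) x
  simp only [LinearMap.id_apply, one_mul] at h
  rw [← h, inner_self_eq_norm_sq]

lemma quad_lower (b : OrthonormalBasis (Fin n) ℂ (EuclideanSpace ℂ (Fin n)))
    (T : EuclideanSpace ℂ (Fin n) →ₗ[ℂ] EuclideanSpace ℂ (Fin n))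
    (μ : Fin n → ℝ) (hT : ∀ j, T (b j) = (μ j : ℂ) • b j)
    (s : Finset (Fin n)) (c : ℝ) (hc : ∀ j ∈ s, c ≤ μ j)
    {x : E} (hx : x ∈ Submodule.span ℂ (b '' ↑s)) :
    c * ‖x‖ ^ 2 ≤ RCLike.re (inner ℂ x (T x) : ℂ) := by
  rw [quad_repr b T μ hT, norm_sq_repr b, Finset.mul_sum]
  rw [← Finset.sum_subset (Finset.subset_univ s)
    (fun j _ hj => by rw [repr_eq_zero_of_mem_span b s hx hj]; simp),
    ← Finset.sum_subset (Finset.subset_univ s)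
    (fun j _ hj => by rw [repr_eq_zero_of_mem_span b s hx hj]; simp)]
  exact Finset.sum_le_sum fun j hj =>
    mul_le_mul_of_nonneg_right (hc j hj) (by positivity)

lemma quad_upper (b : OrthonormalBasis (Fin n) ℂ (EuclideanSpace ℂ (Fin n)))
    (T : EuclideanSpace ℂ (Fin n) →ₗ[ℂ] EuclideanSpace ℂ (Fin n))
    (μ : Fin n → ℝ) (hT : ∀ j, T (b j) = (μ j : ℂ) • b j)
    (s : Finset (Fin n)) (c : ℝ) (hc : ∀ j ∈ s, μ j ≤ c)
    {x : E} (hx : x ∈ Submodule.span ℂ (b '' ↑s)) :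
    RCLike.re (inner ℂ x (T x) : ℂ) ≤ c * ‖x‖ ^ 2 := by
  rw [quad_repr b T μ hT, norm_sq_repr b, Finset.mul_sum]
  rw [← Finset.sum_subset (Finset.subset_univ s)
    (fun j _ hj => by rw [repr_eq_zero_of_mem_span b s hx hj]; simp),
    ← Finset.sum_subset (Finset.subset_univ s)
    (fun j _ hj => by rw [repr_eq_zero_of_mem_span b s hx hj]; simp)]
  exact Finset.sum_le_sum fun j hj =>
    mul_le_mul_of_nonneg_right (hc j hj) (by positivity)

lemma finrank_span_image (b : OrthonormalBasis (Fin n) ℂ (EuclideanSpace ℂ (Fin n)))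
    (s : Finset (Fin n)) :
    finrank ℂ (Submodule.span ℂ (b '' ↑s)) = s.card := by
  have hli : LinearIndependent ℂ (fun j : (↑s : Set (Fin n)) => b j) :=
    b.orthonormal.linearIndependent.comp Subtype.val Subtype.val_injective
  have h := finrank_span_eq_card hli
  rw [← Set.image_eq_range] at h
  rw [h]
  simp

lemma toEuclideanLin_eigen {A : Matrix (Fin n) (Fin n) ℂ} (hA : A.IsHermitian) (j : Fin n) :
    Matrix.toEuclideanLin A (hA.eigenvectorBasis j)
      = (hA.eigenvalues j : ℂ) • hA.eigenvectorBasis j := by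
  apply (WithLp.equiv 2 (Fin n → ℂ)).injective
  simp only [WithLp.equiv_apply, ofLp_toEuclideanLin_apply]
  have := hA.mulVec_eigenvectorBasis j
  ext k
  have hk := congrFun this k
  simpa using hk

end WeylAux

/-- The eigenvalues of a Hermitian matrix arranged in decreasing order:
`eigDesc hA 0` is the largest eigenvalue, etc. -/
noncomputable def eigDesc {n : ℕ} {A : Matrix (Fin n) (Fin n) ℂ}
    (hA : A.IsHermitian) : Fin n → ℝ :=
  fun i => (hA.eigenvalues ∘ Tuple.sort hA.eigenvalues) i.rev

theorem weyl_eigenvalue_inequality {n : ℕ} (A B : Matrix (Fin n) (Fin n) ℂ)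
    (hA : A.IsHermitian) (hB : B.IsHermitian) (hAB : (A + B).IsHermitian)
    (i : Fin n) :
    eigDesc hAB i ≤ eigDesc hA i + eigDesc hB ⟨0, i.pos⟩ := by
  classical
  set bAB := hAB.eigenvectorBasis
  set bA := hA.eigenvectorBasis
  set bB := hB.eigenvectorBasis
  set σAB := Tuple.sort hAB.eigenvalues
  set σA := Tuple.sort hA.eigenvalues
  set σB := Tuple.sort hB.eigenvalues
  -- subspaces
  set sS : Finset (Fin n) := (Finset.Ici i.rev).image σAB with hsS
  set sT : Finset (Fin n) := (Finset.Iic i.rev).image σA with hsT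
  have cardS : sS.card = i.val + 1 := by
    rw [hsS, Finset.card_image_of_injective _ σAB.injective, Fin.card_Ici, Fin.val_rev]
    omega
  have cardT : sT.card = n - i.val := by
    rw [hsT, Finset.card_image_of_injective _ σA.injective, Fin.card_Iic, Fin.val_rev]
    omega
  set S : Submodule ℂ (EuclideanSpace ℂ (Fin n)) := Submodule.span ℂ (bAB '' ↑sS)
  set T : Submodule ℂ (EuclideanSpace ℂ (Fin n)) := Submodule.span ℂ (bA '' ↑sT)
  have hdimS : finrank ℂ S = i.val + 1 := by rw [finrank_span_image]; exact cardS
  have hdimT : finrank ℂ T = n - i.val := by rw [finrank_span_image]; exact cardT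
  -- intersection is nontrivial
  have hint : ∃ x : EuclideanSpace ℂ (Fin n), x ∈ S ⊓ T ∧ x ≠ 0 := by
    have hsum := Submodule.finrank_sup_add_finrank_inf_eq S T
    have hle : finrank ℂ ↥(S ⊔ T) ≤ n := by
      have := Submodule.finrank_le (S ⊔ T)
      rwa [finrank_euclideanSpace, Fintype.card_fin] at this
    have hpos : 0 < finrank ℂ ↥(S ⊓ T) := by
      have hi := i.isLt
      omega
    obtain ⟨⟨x, hx⟩, hx0⟩ := Module.finrank_pos_iff_exists_ne_zero.mp hpos
    exact ⟨x, hx, fun h => hx0 (Subtype.ext h)⟩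
  obtain ⟨x, ⟨hxS, hxT⟩, hx0⟩ := hint
  have hnorm : (0 : ℝ) < ‖x‖ ^ 2 := pow_pos (norm_pos_iff.mpr hx0) 2
  -- monotone sorted eigenvalues
  have monAB := Tuple.monotone_sort hAB.eigenvalues
  have monA := Tuple.monotone_sort hA.eigenvalues
  have monB := Tuple.monotone_sort hB.eigenvalues
  -- lower bound for A+B on S
  have h1 : eigDesc hAB i * ‖x‖ ^ 2
      ≤ RCLike.re (inner ℂ x (Matrix.toEuclideanLin (A + B) x) : ℂ) := by
    refine quad_lower bAB _ hAB.eigenvalues (toEuclideanLin_eigen hAB) sS _ ?_ hxS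
    intro j hj
    rw [hsS, Finset.mem_image] at hj
    obtain ⟨m, hm, rfl⟩ := hj
    rw [Finset.mem_Ici] at hm
    exact monAB hm
  -- upper bound for A on T
  have h2 : RCLike.re (inner ℂ x (Matrix.toEuclideanLin A x) : ℂ)
      ≤ eigDesc hA i * ‖x‖ ^ 2 := by
    refine quad_upper bA _ hA.eigenvalues (toEuclideanLin_eigen hA) sT _ ?_ hxT
    intro j hj
    rw [hsT, Finset.mem_image] at hj
    obtain ⟨m, hm, rfl⟩ := hj
    rw [Finset.mem_Iic] at hm
    exact monA hm
  -- upper bound for B everywhere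
  have h3 : RCLike.re (inner ℂ x (Matrix.toEuclideanLin B x) : ℂ)
      ≤ eigDesc hB ⟨0, i.pos⟩ * ‖x‖ ^ 2 := by
    refine quad_upper bB _ hB.eigenvalues (toEuclideanLin_eigen hB) Finset.univ _ ?_ ?_
    · intro j _
      have hj : hB.eigenvalues j = (hB.eigenvalues ∘ σB) (σB.symm j) := by simp
      rw [hj]
      refine monB ?_
      rw [Fin.le_def, Fin.val_rev]
      have h0 : ((⟨0, i.pos⟩ : Fin n) : ℕ) = 0 := rfl
      rw [h0]
      have hlt := (σB.symm j).isLt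
      omega
    · have hsp : Submodule.span ℂ (⇑bB '' ↑(Finset.univ : Finset (Fin n))) = ⊤ := by
        rw [Finset.coe_univ, Set.image_univ, ← OrthonormalBasis.coe_toBasis, Basis.span_eq]
      rw [hsp]
      exact Submodule.mem_top
  -- combine
  have hadd : RCLike.re (inner ℂ x (Matrix.toEuclideanLin (A + B) x) : ℂ)
      = RCLike.re (inner ℂ x (Matrix.toEuclideanLin A x) : ℂ)
      + RCLike.re (inner ℂ x (Matrix.toEuclideanLin B x) : ℂ) := by
    rw [map_add, LinearMap.add_apply, inner_add_right, map_add]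
  have hfin : eigDesc hAB i * ‖x‖ ^ 2
      ≤ (eigDesc hA i + eigDesc hB ⟨0, i.pos⟩) * ‖x‖ ^ 2 := by
    rw [add_mul]
    linarith [h1, h2, h3, hadd.le, hadd.ge]
  exact le_of_mul_le_mul_right hfin hnorm
end
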